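/- Define the viable feedback correspondence B^viab(t,x) = argmax_{u ∈ B(t,x)} E_μ[1_{A(t)}(x) V(t+1, f(t,x,u,ω))], which is nonempty since B(t,x) is finite and nonempty. Then any feedback u* with u*(t,x) ∈ B^viab(t,x) for all (t,x) achieves the maximal viability probability: for every (t₀,x₀), P(closed-loop trajectory from x₀ under u* stays in A(s) for s = t₀,...,T) = V(t₀,x₀). In particular, if x₀ ∈ Viab_β(t₀) then u* is a β-viable feedback. -/

import Mathlib

open Finset Filter
open scoped Classical BigOperators

/-- State after evolving `k` steps from `x` at time `t` under feedback `u` and scenario `ω`. -/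
def traj {X U W : Type*} (f : ℕ → X → U → W → X) (u : ℕ → X → U) (ω : ℕ → W) :
    ℕ → X → ℕ → X
  | _, x, 0 => x
  | t, x, k + 1 => traj f u ω (t + 1) (f t x (u t x) (ω t)) k

/-- Probability, under the product law of the i.i.d. noise with marginal `μ`, that the
closed-loop trajectory starting from `x0` at time `t0` under feedback `u` satisfies the
state constraints `A s` for all `s = t0, …, T`. -/
noncomputable def viabProb {X U W : Type*} [Fintype W] [Inhabited W]
    (f : ℕ → X → U → W → X) (A : ℕ → Set X) (μ : W → ℝ) (T : ℕ)
    (u : ℕ → X → U) (t0 : ℕ) (x0 : X) : ℝ :=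
  ∑ ω : Fin T → W, (∏ i, μ (ω i)) *
    (if ∀ s ∈ Finset.Icc t0 T,
        traj f u (fun n => if h : n < T then ω ⟨n, h⟩ else default) t0 x0 (s - t0) ∈ A s
      then (1 : ℝ) else 0)

section Aux

set_option linter.unusedSectionVars false

variable {X U W : Type*} [Fintype W] [Inhabited W]

lemma sum_prod_mu (μ : W → ℝ) (hmu1 : ∑ w, μ w = 1) (n : ℕ) :
    ∑ ω : Fin n → W, ∏ i, μ (ω i) = 1 := by
  have h := Finset.prod_univ_sum (fun _ : Fin n => (Finset.univ : Finset W)) (fun _ w => μ w)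
  rw [Fintype.piFinset_univ] at h
  rw [← h]
  simp [hmu1]

lemma traj_congr (f : ℕ → X → U → W → X) (u : ℕ → X → U) :
    ∀ (k t : ℕ) (x : X) (ω1 ω2 : ℕ → W),
      (∀ n, t ≤ n → n < t + k → ω1 n = ω2 n) →
      traj f u ω1 t x k = traj f u ω2 t x k
  | 0, _, _, _, _, _ => rfl
  | k+1, t, x, ω1, ω2, h => by
      have h0 : ω1 t = ω2 t := h t le_rfl (by omega)
      rw [traj, traj, h0]
      exact traj_congr f u k (t+1) _ ω1 ω2 (fun n h1 h2 => h n (by omega) (by omega))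

lemma sum_split {T : ℕ} (μ : W → ℝ) (hmu1 : ∑ w, μ w = 1) (j : Fin T)
    (F : W → (Fin T → W) → ℝ)
    (hF : ∀ w ω w', F w (Function.update ω j w') = F w ω) :
    ∑ ω : Fin T → W, (∏ i, μ (ω i)) * F (ω j) ω
      = ∑ w, μ w * ∑ ω : Fin T → W, (∏ i, μ (ω i)) * F w ω := by
  classical
  set e := Equiv.funSplitAt j W with he
  have hupd : ∀ (w w' : W) (ρ : {i // i ≠ j} → W),
      e.symm (w, ρ) = Function.update (e.symm (w', ρ)) j w := by
    intro w w' ρ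
    funext i
    by_cases hi : i = j
    · subst hi; simp [he, Equiv.funSplitAt, Equiv.piSplitAt, Function.update]
    · simp [he, Equiv.funSplitAt, Equiv.piSplitAt, Function.update, hi]
  have hFconst : ∀ (v w : W) (ρ : {i // i ≠ j} → W),
      F v (e.symm (w, ρ)) = F v (e.symm ((default : W), ρ)) := by
    intro v w ρ
    rw [hupd w default ρ, hF]
  have hprod : ∀ (w : W) (ρ : {i // i ≠ j} → W),
      (∏ i, μ ((e.symm (w, ρ)) i)) = μ w * ∏ i' : {i // i ≠ j}, μ (ρ i') := by
    intro w ρ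
    have hj : (e.symm (w, ρ)) j = w := by
      simp [he, Equiv.funSplitAt, Equiv.piSplitAt]
    rw [← Finset.mul_prod_erase Finset.univ _ (Finset.mem_univ j), hj]
    congr 1
    rw [Finset.prod_subtype (Finset.univ.erase j)
        (p := fun i => i ≠ j) (by simp) (fun i => μ ((e.symm (w, ρ)) i))]
    apply Finset.prod_congr rfl
    intro i _
    have hij : (i : Fin T) ≠ j := i.2
    simp [he, Equiv.funSplitAt, Equiv.piSplitAt, hij]
  set c : W → ℝ := fun v => ∑ ρ : {i // i ≠ j} → W,
      (∏ i' : {i // i ≠ j}, μ (ρ i')) * F v (e.symm ((default : W), ρ)) with hc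
  have hgen : ∀ v : W, (∑ ω : Fin T → W, (∏ i, μ (ω i)) * F v ω) = c v := by
    intro v
    rw [← Equiv.sum_comp e.symm (fun ω => (∏ i, μ (ω i)) * F v ω)]
    rw [Fintype.sum_prod_type]
    have h1 : ∀ w : W, ∑ ρ : {i // i ≠ j} → W,
        (∏ i, μ ((e.symm (w, ρ)) i)) * F v (e.symm (w, ρ)) = μ w * c v := by
      intro w
      rw [hc, Finset.mul_sum]
      apply Finset.sum_congr rfl
      intro ρ _
      rw [hprod, hFconst, mul_assoc]
    simp_rw [h1]
    rw [← Finset.sum_mul, hmu1, one_mul]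
  have hlhs : ∑ ω : Fin T → W, (∏ i, μ (ω i)) * F (ω j) ω = ∑ w, μ w * c w := by
    rw [← Equiv.sum_comp e.symm (fun ω => (∏ i, μ (ω i)) * F (ω j) ω)]
    rw [Fintype.sum_prod_type]
    apply Finset.sum_congr rfl
    intro w _
    have hj : ∀ ρ : {i // i ≠ j} → W, (e.symm (w, ρ)) j = w := by
      intro ρ; simp [he, Equiv.funSplitAt, Equiv.piSplitAt]
    rw [hc, Finset.mul_sum]
    apply Finset.sum_congr rfl
    intro ρ _
    rw [hj, hprod, hFconst, mul_assoc]
  rw [hlhs]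
  apply Finset.sum_congr rfl
  intro w _
  rw [hgen]

lemma viabProb_last (f : ℕ → X → U → W → X) (A : ℕ → Set X) (μ : W → ℝ)
    (hmu1 : ∑ w, μ w = 1) (T : ℕ) (u : ℕ → X → U) (x0 : X) :
    viabProb f A μ T u T x0 = if x0 ∈ A T then (1 : ℝ) else 0 := by
  unfold viabProb
  have h : ∀ ω : Fin T → W,
      (if ∀ s ∈ Finset.Icc T T,
          traj f u (fun n => if h : n < T then ω ⟨n, h⟩ else default) T x0 (s - T) ∈ A s
        then (1 : ℝ) else 0) = if x0 ∈ A T then (1 : ℝ) else 0 := by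
    intro ω
    congr 1
    simp only [Finset.Icc_self, Finset.mem_singleton, eq_iff_iff]
    constructor
    · intro h; have := h T rfl; simpa [traj] using this
    · intro h s hs; subst hs; simpa [traj] using h
  simp_rw [h]
  rw [← Finset.sum_mul, sum_prod_mu μ hmu1 T, one_mul]

lemma viabProb_succ (f : ℕ → X → U → W → X) (A : ℕ → Set X) (μ : W → ℝ)
    (hmu1 : ∑ w, μ w = 1) (T : ℕ) (u : ℕ → X → U) (t0 : ℕ) (ht : t0 < T) (x0 : X) :
    viabProb f A μ T u t0 x0 = (if x0 ∈ A t0 then (1 : ℝ) else 0) *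
      ∑ w, μ w * viabProb f A μ T u (t0 + 1) (f t0 x0 (u t0 x0) w) := by
  classical
  set j : Fin T := ⟨t0, ht⟩ with hj
  set F : W → (Fin T → W) → ℝ := fun w ω =>
    if ∀ s ∈ Finset.Icc (t0 + 1) T,
        traj f u (fun n => if h : n < T then ω ⟨n, h⟩ else default) (t0 + 1)
          (f t0 x0 (u t0 x0) w) (s - (t0 + 1)) ∈ A s
      then (1 : ℝ) else 0 with hFdef
  have key : ∀ ω : Fin T → W,
      (if ∀ s ∈ Finset.Icc t0 T,
          traj f u (fun n => if h : n < T then ω ⟨n, h⟩ else default) t0 x0 (s - t0) ∈ A s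
        then (1 : ℝ) else 0)
      = (if x0 ∈ A t0 then (1 : ℝ) else 0) * F (ω j) ω := by
    intro ω
    have hwt : (if h : t0 < T then ω ⟨t0, h⟩ else default) = ω j := dif_pos ht
    have hiff : (∀ s ∈ Finset.Icc t0 T,
          traj f u (fun n => if h : n < T then ω ⟨n, h⟩ else default) t0 x0 (s - t0) ∈ A s)
        ↔ (x0 ∈ A t0 ∧ ∀ s ∈ Finset.Icc (t0 + 1) T,
          traj f u (fun n => if h : n < T then ω ⟨n, h⟩ else default) (t0 + 1)
            (f t0 x0 (u t0 x0) (ω j)) (s - (t0 + 1)) ∈ A s) := by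
      constructor
      · intro h
        refine ⟨by simpa [traj] using h t0 (by rw [Finset.mem_Icc]; omega), ?_⟩
        intro s hs
        rw [Finset.mem_Icc] at hs
        have h2 := h s (by rw [Finset.mem_Icc]; omega)
        have hk : s - t0 = (s - (t0 + 1)) + 1 := by omega
        rw [hk, traj] at h2
        simpa [hwt] using h2
      · rintro ⟨h1, h2⟩ s hs
        rw [Finset.mem_Icc] at hs
        rcases Nat.eq_or_lt_of_le hs.1 with h | h
        · subst h; simpa [traj] using h1
        · have h3 := h2 s (by rw [Finset.mem_Icc]; omega)
          have hk : s - t0 = (s - (t0 + 1)) + 1 := by omega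
          rw [hk, traj]
          simpa [hwt] using h3
    simp only [hFdef]
    rw [if_congr hiff rfl rfl]
    by_cases h1 : x0 ∈ A t0 <;>
      by_cases h2 : (∀ s ∈ Finset.Icc (t0 + 1) T,
          traj f u (fun n => if h : n < T then ω ⟨n, h⟩ else default) (t0 + 1)
            (f t0 x0 (u t0 x0) (ω j)) (s - (t0 + 1)) ∈ A s) <;>
      simp [h1, h2]
  unfold viabProb
  simp_rw [key]
  have hmc : ∀ ω : Fin T → W,
      (∏ i, μ (ω i)) * ((if x0 ∈ A t0 then (1 : ℝ) else 0) * F (ω j) ω)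
      = (if x0 ∈ A t0 then (1 : ℝ) else 0) * ((∏ i, μ (ω i)) * F (ω j) ω) := by
    intro ω; ring
  simp_rw [hmc]
  rw [← Finset.mul_sum]
  congr 1
  have hFupd : ∀ w ω w', F w (Function.update ω j w') = F w ω := by
    intro w ω w'
    simp only [hFdef]
    congr 1
    simp only [eq_iff_iff]
    have htraj : ∀ s ∈ Finset.Icc (t0 + 1) T,
        traj f u (fun n => if h : n < T then Function.update ω j w' ⟨n, h⟩ else default)
          (t0 + 1) (f t0 x0 (u t0 x0) w) (s - (t0 + 1))
        = traj f u (fun n => if h : n < T then ω ⟨n, h⟩ else default)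
          (t0 + 1) (f t0 x0 (u t0 x0) w) (s - (t0 + 1)) := by
      intro s _
      apply traj_congr
      intro n hn _
      split_ifs with h
      · rw [Function.update_of_ne]
        intro hc
        have : n = t0 := by simpa [hj, Fin.ext_iff] using hc
        omega
      · rfl
    constructor
    · intro h s hs; rw [← htraj s hs]; exact h s hs
    · intro h s hs; rw [htraj s hs]; exact h s hs
  rw [sum_split μ hmu1 j F hFupd]

end Aux

theorem viable_feedback_achieves_value
    {X U W : Type*} [Fintype W] [Inhabited W]
    (f : ℕ → X → U → W → X) (B : ℕ → X → Finset U) (A : ℕ → Set X)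
    (μ : W → ℝ) (hmu0 : ∀ w, 0 ≤ μ w) (hmu1 : ∑ w, μ w = 1) (T : ℕ)
    (hB : ∀ t x, (B t x).Nonempty)
    (V : ℕ → X → ℝ)
    (hVT : ∀ x, V T x = if x ∈ A T then (1 : ℝ) else 0)
    (hV : ∀ t, t < T → ∀ x,
      V t x = (B t x).sup' (hB t x)
        (fun u => (if x ∈ A t then (1 : ℝ) else 0) * ∑ w, μ w * V (t + 1) (f t x u w)))
    (ustar : ℕ → X → U)
    (hstar : ∀ t, t < T → ∀ x, ustar t x ∈ B t x ∧
      ∀ v ∈ B t x,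
        (if x ∈ A t then (1 : ℝ) else 0) * ∑ w, μ w * V (t + 1) (f t x v w) ≤
          (if x ∈ A t then (1 : ℝ) else 0) * ∑ w, μ w * V (t + 1) (f t x (ustar t x) w)) :
    (∀ t, t < T → ∀ x, ∃ u ∈ B t x, ∀ v ∈ B t x,
        (if x ∈ A t then (1 : ℝ) else 0) * ∑ w, μ w * V (t + 1) (f t x v w) ≤
          (if x ∈ A t then (1 : ℝ) else 0) * ∑ w, μ w * V (t + 1) (f t x u w)) ∧
    (∀ t0 ≤ T, ∀ x0, viabProb f A μ T ustar t0 x0 = V t0 x0) ∧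
    (∀ β : ℝ, ∀ t0 ≤ T, ∀ x0, β ≤ V t0 x0 → β ≤ viabProb f A μ T ustar t0 x0) := by
  have main : ∀ d t0, t0 + d = T → ∀ x0, viabProb f A μ T ustar t0 x0 = V t0 x0 := by
    intro d
    induction d with
    | zero =>
      intro t0 h x0
      have hT : t0 = T := by omega
      rw [hT, viabProb_last f A μ hmu1 T ustar x0, hVT]
    | succ d ih =>
      intro t0 h x0
      have ht : t0 < T := by omega
      rw [viabProb_succ f A μ hmu1 T ustar t0 ht x0]
      have hVstar : V t0 x0 = (if x0 ∈ A t0 then (1 : ℝ) else 0) *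
          ∑ w, μ w * V (t0 + 1) (f t0 x0 (ustar t0 x0) w) := by
        rw [hV t0 ht x0]
        apply le_antisymm
        · exact Finset.sup'_le _ _ (hstar t0 ht x0).2
        · exact Finset.le_sup'
            (fun v => (if x0 ∈ A t0 then (1 : ℝ) else 0) * ∑ w, μ w * V (t0 + 1) (f t0 x0 v w))
            (hstar t0 ht x0).1
      rw [hVstar]
      congr 1
      apply Finset.sum_congr rfl
      intro w _
      rw [ih (t0 + 1) (by omega)]
  have main2 : ∀ t0 ≤ T, ∀ x0, viabProb f A μ T ustar t0 x0 = V t0 x0 :=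
    fun t0 ht0 x0 => main (T - t0) t0 (by omega) x0
  exact ⟨fun t ht x => ⟨ustar t x, (hstar t ht x).1, (hstar t ht x).2⟩, main2,
    fun β t0 ht0 x0 hb => by rw [main2 t0 ht0 x0]; exact hb⟩
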